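/- Let p, q, r ∈ ℤ with p > 0 and D = q² − 4pr. The map Γ sending (x + y√D)/2 (with x² − Dy² = ±4) to the matrix [[(x−yq)/2, −yr],[yp, (x+yq)/2]] is multiplicative: Γ(z·z') = Γ(z)·Γ(z') for z, z' in the Pell group G = {(x+y√D)/2 : x² − Dy² = ±4}. -/

import Mathlib

theorem pell_matrix_multiplicative (p q r : ℤ) (hp : 0 < p) (D : ℤ)
    (hD : D = q ^ 2 - 4 * p * r) (hDpos : 0 < D) (hns : ¬ IsSquare D)
    (x y x' y' X Y : ℤ)
    (hpell : x ^ 2 - D * y ^ 2 = 4 ∨ x ^ 2 - D * y ^ 2 = -4)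
    (hpell' : x' ^ 2 - D * y' ^ 2 = 4 ∨ x' ^ 2 - D * y' ^ 2 = -4)
    (hmul : ((X : ℝ) + Y * Real.sqrt (D : ℝ)) / 2 =
      (((x : ℝ) + y * Real.sqrt (D : ℝ)) / 2) * (((x' : ℝ) + y' * Real.sqrt (D : ℝ)) / 2)) :
    Matrix.of ![![(X - Y * q) / 2, -Y * r], ![Y * p, (X + Y * q) / 2]] =
      Matrix.of ![![(x - y * q) / 2, -y * r], ![y * p, (x + y * q) / 2]] *
        Matrix.of ![![(x' - y' * q) / 2, -y' * r], ![y' * p, (x' + y' * q) / 2]] := by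
  have hDr : (0:ℝ) ≤ (D:ℝ) := by exact_mod_cast hDpos.le
  have hs : Real.sqrt (D:ℝ) ^ 2 = (D:ℝ) := Real.sq_sqrt hDr
  have hirr : Irrational (Real.sqrt (D:ℝ)) :=
    (irrational_sqrt_intCast_iff_of_nonneg hDpos.le).mpr hns
  have key : ((2*Y - (x*y' + x'*y) : ℤ) : ℝ) * Real.sqrt (D:ℝ)
      = ((x*x' + D*(y*y') - 2*X : ℤ) : ℝ) := by
    push_cast
    linear_combination 4*hmul + ((y:ℝ)*y')*hs
  have h2 : 2*Y = x*y' + x'*y := by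
    by_contra hc
    have hc0 : (2*Y - (x*y' + x'*y)) ≠ 0 := by omega
    exact (hirr.intCast_mul hc0).ne_int _ key
  have h1 : 2*X = x*x' + D*(y*y') := by
    have h0 : (2*Y - (x*y' + x'*y)) = 0 := by omega
    rw [h0] at key
    simp at key
    have : ((2*X : ℤ):ℝ) = ((x*x' + D*(y*y') : ℤ):ℝ) := by push_cast; linarith
    exact_mod_cast this
  -- parity
  have hpar : ∀ u v : ℤ, (u ^ 2 - D * v ^ 2 = 4 ∨ u ^ 2 - D * v ^ 2 = -4) → ∃ a, u - v*q = 2*a := by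
    intro u v h
    have hev : Even ((u - v*q)*(u + v*q)) := by
      rcases h with h | h
      · exact ⟨2 - 2*(p*r)*v^2, by linear_combination h + v^2*hD⟩
      · exact ⟨-2 - 2*(p*r)*v^2, by linear_combination h + v^2*hD⟩
    rcases Int.even_mul.mp hev with ⟨a, ha⟩ | ⟨b, hb⟩
    · exact ⟨a, by omega⟩
    · exact ⟨b - v*q, by omega⟩
  obtain ⟨a, ha⟩ := hpar x y hpell
  obtain ⟨a', ha'⟩ := hpar x' y' hpell'
  have hb : x + y*q = 2*(a + y*q) := by omega
  have hb' : x' + y'*q = 2*(a' + y'*q) := by omega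
  set b := a + y*q with hbdef
  set b' := a' + y'*q with hbdef'
  have hA : X - Y*q = 2*(a*a' - p*r*(y*y')) := by
    have h : 2*(X - Y*q) = 4*(a*a' - p*r*(y*y')) := by
      linear_combination h1 - q*h2 + (x' - y'*q)*ha + 2*a*ha' + (y*y')*hD
    omega
  have hB : X + Y*q = 2*(b*b' - p*r*(y*y')) := by
    have h : 2*(X + Y*q) = 4*(b*b' - p*r*(y*y')) := by
      linear_combination h1 + q*h2 + (x' + y'*q)*hb + 2*b*hb' + (y*y')*hD
    omega
  have e1 : (X - Y*q)/2 = a*a' - p*r*(y*y') := by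
    rw [hA]; exact Int.mul_ediv_cancel_left _ two_ne_zero
  have e2 : (X + Y*q)/2 = b*b' - p*r*(y*y') := by
    rw [hB]; exact Int.mul_ediv_cancel_left _ two_ne_zero
  have f1 : (x - y*q)/2 = a := by rw [ha]; exact Int.mul_ediv_cancel_left _ two_ne_zero
  have f2 : (x + y*q)/2 = b := by rw [hb]; exact Int.mul_ediv_cancel_left _ two_ne_zero
  have g1 : (x' - y'*q)/2 = a' := by rw [ha']; exact Int.mul_ediv_cancel_left _ two_ne_zero
  have g2 : (x' + y'*q)/2 = b' := by rw [hb']; exact Int.mul_ediv_cancel_left _ two_ne_zero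
  have hY : Y = a*y' + a'*y + q*(y*y') := by
    have h : 2*Y = 2*(a*y' + a'*y + q*(y*y')) := by
      linear_combination h2 + y'*ha + y*ha'
    omega
  ext i j
  fin_cases i <;> fin_cases j <;>
    simp [Matrix.mul_apply, Fin.sum_univ_two, e1, e2, f1, f2, g1, g2] <;> ring_nf
  · linear_combination (-r)*hY
  · linear_combination p*hY
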